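/- Define φ_n(f,g,h) = Σ_{𝐬 ∈ Sⁿ} Tr(ρ_𝐬(f)[F, ρ_𝐬(g)][F, ρ_𝐬(h)]M), where the sum is over all 4ⁿ level-n squares of the Cantor dust and ρ_𝐬(f) denotes evaluation of f at the four vertices of f_𝐬([0,1]²). Then for every continuous f on CD and Lipschitz g, h on CD, |φ_n(f,g,h)| ≤ 8·‖f‖_∞·Lip(g)·Lip(h)·(4/9)ⁿ. -/
import Mathlib


open Matrix

noncomputable def Fop : Matrix (Fin 4) (Fin 4) ℂ :=
  ((Real.sqrt 2 : ℝ) : ℂ)⁻¹ • !![0,0,1,1; 0,0,-1,1; 1,-1,0,0; 1,1,0,0]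

/-- Multiplication operator: diagonal of vertex values, ordered v₀, v₂, v₁, v₃. -/
def rho (f : Fin 4 → ℂ) : Matrix (Fin 4) (Fin 4) ℂ :=
  !![f 0, 0, 0, 0; 0, f 2, 0, 0; 0, 0, f 1, 0; 0, 0, 0, f 3]

def Mmat : Matrix (Fin 4) (Fin 4) ℂ :=
  !![0,1,0,0; -1,0,0,0; 0,0,0,1; 0,0,-1,0]

/-- The four similitudes of the Cantor-dust IFS. -/
noncomputable def ifsMap : Fin 4 → ℝ × ℝ → ℝ × ℝ
  | 0 => fun p => (p.1 / 3, p.2 / 3)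
  | 1 => fun p => (p.1 / 3, p.2 / 3 + 2/3)
  | 2 => fun p => (p.1 / 3 + 2/3, p.2 / 3)
  | 3 => fun p => (p.1 / 3 + 2/3, p.2 / 3 + 2/3)

/-- `f_𝐬 = f_{s₁} ∘ ⋯ ∘ f_{sₙ}`. -/
noncomputable def ifsComp {n : ℕ} (s : Fin n → Fin 4) : ℝ × ℝ → ℝ × ℝ :=
  (List.ofFn s).foldr (fun i g => ifsMap i ∘ g) id

/-- The corners of the unit square, numbered counterclockwise from the origin. -/
noncomputable def corner : Fin 4 → ℝ × ℝ := ![(0, 0), (1, 0), (1, 1), (0, 1)]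

/-- The `i`-th vertex of the level-`n` square indexed by `s`. -/
noncomputable def vert {n : ℕ} (s : Fin n → Fin 4) (i : Fin 4) : ℝ × ℝ :=
  ifsComp s (corner i)

-- geometry lemmas
lemma ifs_dist (j : Fin 4) (p q : ℝ × ℝ) :
    dist (ifsMap j p) (ifsMap j q) = dist p q / 3 := by
  have habs : ∀ x y c : ℝ, |x / 3 + c - (y / 3 + c)| = |x - y| / 3 := by
    intro x y c
    rw [show x / 3 + c - (y / 3 + c) = (x - y) / 3 by ring, abs_div]
    norm_num
  have habs' : ∀ x y : ℝ, |x / 3 - y / 3| = |x - y| / 3 := by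
    intro x y
    have := habs x y 0
    simpa using this
  fin_cases j <;>
    simp only [ifsMap, Prod.dist_eq, Real.dist_eq, habs, habs', max_div_div_right (by norm_num : (0:ℝ) ≤ 3)]

lemma ifsComp_succ {n : ℕ} (s : Fin (n+1) → Fin 4) :
    ifsComp s = ifsMap (s 0) ∘ ifsComp (fun i => s i.succ) := by
  simp [ifsComp, List.ofFn_succ]

lemma ifsComp_dist {n : ℕ} (s : Fin n → Fin 4) (p q : ℝ × ℝ) :
    dist (ifsComp s p) (ifsComp s q) = dist p q / 3 ^ n := by
  induction n with
  | zero => simp [ifsComp]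
  | succ m ih =>
      rw [ifsComp_succ]
      simp only [Function.comp_apply, ifs_dist, ih]
      rw [pow_succ]
      ring

lemma corner_dist (i j : Fin 4) : dist (corner i) (corner j) ≤ 1 := by
  fin_cases i <;> fin_cases j <;>
    simp [corner, Prod.dist_eq, Real.dist_eq, Prod.norm_def, Real.norm_eq_abs] <;> norm_num

section CDfacts
variable {CD : Set (ℝ × ℝ)}

lemma ifs_mapsto (hCDinv : CD = ⋃ i : Fin 4, ifsMap i '' CD) (j : Fin 4) :
    ∀ x ∈ CD, ifsMap j x ∈ CD := by
  intro x hx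
  have h : ifsMap j x ∈ ⋃ i : Fin 4, ifsMap i '' CD := Set.mem_iUnion.2 ⟨j, ⟨x, hx, rfl⟩⟩
  rwa [← hCDinv] at h

lemma fixed_mem (hCDne : CD.Nonempty) (hCDcomp : IsCompact CD)
    (hCDinv : CD = ⋃ i : Fin 4, ifsMap i '' CD) (j : Fin 4) (c : ℝ × ℝ)
    (hc : ifsMap j c = c) : c ∈ CD := by
  obtain ⟨p, hp⟩ := hCDne
  have hmem : ∀ k : ℕ, (ifsMap j)^[k] p ∈ CD := by
    intro k
    induction k with
    | zero => simpa using hp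
    | succ m ih => rw [Function.iterate_succ_apply']; exact ifs_mapsto hCDinv j _ ih
  have hdist : ∀ k : ℕ, dist ((ifsMap j)^[k] p) c ≤ dist p c * (1/3) ^ k := by
    intro k
    induction k with
    | zero => simp
    | succ m ih =>
        rw [Function.iterate_succ_apply']
        calc dist (ifsMap j ((ifsMap j)^[m] p)) c
            = dist (ifsMap j ((ifsMap j)^[m] p)) (ifsMap j c) := by rw [hc]
          _ = dist ((ifsMap j)^[m] p) c / 3 := ifs_dist j _ _
          _ ≤ dist p c * (1/3) ^ m / 3 := by linarith
          _ = dist p c * (1/3) ^ (m+1) := by rw [pow_succ]; ring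
  have htend : Filter.Tendsto (fun k : ℕ => (ifsMap j)^[k] p) Filter.atTop (nhds c) := by
    rw [tendsto_iff_dist_tendsto_zero]
    apply squeeze_zero (fun k => dist_nonneg) hdist
    have h0 : Filter.Tendsto (fun k : ℕ => (1/3 : ℝ) ^ k) Filter.atTop (nhds 0) :=
      tendsto_pow_atTop_nhds_zero_of_lt_one (by norm_num) (by norm_num)
    simpa using h0.const_mul (dist p c)
  exact hCDcomp.isClosed.mem_of_tendsto htend (Filter.Eventually.of_forall hmem)

lemma corner_mem (hCDne : CD.Nonempty) (hCDcomp : IsCompact CD)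
    (hCDinv : CD = ⋃ i : Fin 4, ifsMap i '' CD) (i : Fin 4) : corner i ∈ CD := by
  fin_cases i
  · exact fixed_mem hCDne hCDcomp hCDinv 0 _ (by simp [ifsMap, corner])
  · exact fixed_mem hCDne hCDcomp hCDinv 2 _ (by simp [ifsMap, corner]; norm_num)
  · exact fixed_mem hCDne hCDcomp hCDinv 3 _ (by simp [ifsMap, corner]; norm_num)
  · exact fixed_mem hCDne hCDcomp hCDinv 1 _ (by simp [ifsMap, corner]; norm_num)

lemma ifsComp_mem (hCDinv : CD = ⋃ i : Fin 4, ifsMap i '' CD) {n : ℕ}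
    (s : Fin n → Fin 4) : ∀ x ∈ CD, ifsComp s x ∈ CD := by
  induction n with
  | zero => intro x hx; simpa [ifsComp] using hx
  | succ m ih =>
      intro x hx
      rw [ifsComp_succ]
      exact ifs_mapsto hCDinv _ _ (ih (fun i => s i.succ) x hx)

lemma vert_mem (hCDne : CD.Nonempty) (hCDcomp : IsCompact CD)
    (hCDinv : CD = ⋃ i : Fin 4, ifsMap i '' CD) {n : ℕ} (s : Fin n → Fin 4) (i : Fin 4) :
    vert s i ∈ CD :=
  ifsComp_mem hCDinv s _ (corner_mem hCDne hCDcomp hCDinv i)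

lemma vert_dist {n : ℕ} (s : Fin n → Fin 4) (i j : Fin 4) :
    dist (vert s i) (vert s j) ≤ (1/3 : ℝ) ^ n := by
  unfold vert
  rw [ifsComp_dist]
  rw [div_le_iff₀ (by positivity)]
  calc dist (corner i) (corner j) ≤ 1 := corner_dist i j
    _ ≤ (1/3 : ℝ) ^ n * 3 ^ n := by rw [← mul_pow]; norm_num
def Cm (e : Fin 4 → ℂ) : Matrix (Fin 4) (Fin 4) ℂ :=
  !![0, 0, e 1 - e 0, e 3 - e 0;
     0, 0, e 2 - e 1, e 3 - e 2;
     e 0 - e 1, e 1 - e 2, 0, 0;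
     e 0 - e 3, e 2 - e 3, 0, 0]

def F0 : Matrix (Fin 4) (Fin 4) ℂ := !![0,0,1,1; 0,0,-1,1; 1,-1,0,0; 1,1,0,0]

lemma comm0_eq (e : Fin 4 → ℂ) : F0 * rho e - rho e * F0 = Cm e := by
  ext i j
  fin_cases i <;> fin_cases j <;>
    simp [F0, rho, Cm, Matrix.mul_apply, Fin.sum_univ_four] <;>
    first
      | rfl
      | ring
      | simp [Matrix.vecHead, Matrix.vecTail]

lemma comm_eq (e : Fin 4 → ℂ) :
    Fop * rho e - rho e * Fop = ((Real.sqrt 2 : ℝ) : ℂ)⁻¹ • Cm e := by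
  have : Fop = ((Real.sqrt 2 : ℝ) : ℂ)⁻¹ • F0 := rfl
  rw [this, smul_mul_assoc, mul_smul_comm, ← smul_sub, comm0_eq]

lemma rho_mul_Cm (d e : Fin 4 → ℂ) :
    rho d * Cm e =
    !![0, 0, d 0 * (e 1 - e 0), d 0 * (e 3 - e 0);
       0, 0, d 2 * (e 2 - e 1), d 2 * (e 3 - e 2);
       d 1 * (e 0 - e 1), d 1 * (e 1 - e 2), 0, 0;
       d 3 * (e 0 - e 3), d 3 * (e 2 - e 3), 0, 0] := by
  ext i j
  fin_cases i <;> fin_cases j <;>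
    simp [rho, Cm, Matrix.mul_apply, Fin.sum_univ_four, Matrix.vecHead, Matrix.vecTail]

lemma Cm_mul_M (k : Fin 4 → ℂ) :
    Cm k * Mmat =
    !![0, 0, k 0 - k 3, k 1 - k 0;
       0, 0, k 2 - k 3, k 2 - k 1;
       k 2 - k 1, k 0 - k 1, 0, 0;
       k 3 - k 2, k 0 - k 3, 0, 0] := by
  ext i j
  fin_cases i <;> fin_cases j <;>
    simp [Cm, Mmat, Matrix.mul_apply, Fin.sum_univ_four, Matrix.vecHead, Matrix.vecTail] <;>
    ring

lemma trace_eq (d e k : Fin 4 → ℂ) :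
    (rho d * (Fop * rho e - rho e * Fop) * (Fop * rho k - rho k * Fop) * Mmat).trace =
    (1/2 : ℂ) *
      (d 0 * ((e 1 - e 0) * (k 2 - k 1) + (e 3 - e 0) * (k 3 - k 2)) +
       d 2 * ((e 2 - e 1) * (k 0 - k 1) + (e 3 - e 2) * (k 0 - k 3)) +
       d 1 * ((e 0 - e 1) * (k 0 - k 3) + (e 1 - e 2) * (k 2 - k 3)) +
       d 3 * ((e 0 - e 3) * (k 1 - k 0) + (e 2 - e 3) * (k 2 - k 1))) := by
  have h2 : ((Real.sqrt 2 : ℝ) : ℂ) * ((Real.sqrt 2 : ℝ) : ℂ) = 2 := by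
    rw [← Complex.ofReal_mul, Real.mul_self_sqrt (by norm_num)]; norm_num
  have ht : ((Real.sqrt 2 : ℝ) : ℂ)⁻¹ * ((Real.sqrt 2 : ℝ) : ℂ)⁻¹ = 1/2 := by
    rw [← mul_inv, h2]; norm_num
  rw [comm_eq, comm_eq, mul_smul_comm, smul_mul_assoc, mul_smul_comm, smul_mul_assoc,
    smul_mul_assoc, smul_smul, ht, Matrix.trace_smul]
  rw [mul_assoc (rho d * Cm e), rho_mul_Cm, Cm_mul_M]
  rw [smul_eq_mul]
  congr 1
  simp [Matrix.trace, Matrix.diag, Fin.sum_univ_four, Matrix.mul_apply, Matrix.vecHead,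
    Matrix.vecTail]
  ring

-- norm bound for a single trace term
lemma trace_norm_le (d e k : Fin 4 → ℂ) (Bb u v : ℝ)
    (hd : ∀ i, ‖d i‖ ≤ Bb) (he : ∀ i j, ‖e i - e j‖ ≤ u) (hk : ∀ i j, ‖k i - k j‖ ≤ v) :
    ‖(rho d * (Fop * rho e - rho e * Fop) * (Fop * rho k - rho k * Fop) * Mmat).trace‖ ≤
      4 * Bb * u * v := by
  have hB0 : 0 ≤ Bb := le_trans (norm_nonneg _) (hd 0)
  have hu0 : 0 ≤ u := le_trans (norm_nonneg _) (he 0 0)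
  have hv0 : 0 ≤ v := le_trans (norm_nonneg _) (hk 0 0)
  have hprod : ∀ i1 i2 j1 j2 : Fin 4, ‖(e i1 - e i2) * (k j1 - k j2)‖ ≤ u * v := by
    intro i1 i2 j1 j2
    rw [norm_mul]
    exact mul_le_mul (he _ _) (hk _ _) (norm_nonneg _) hu0
  have hterm : ∀ (i i1 i2 j1 j2 i3 i4 j3 j4 : Fin 4),
      ‖d i * ((e i1 - e i2) * (k j1 - k j2) + (e i3 - e i4) * (k j3 - k j4))‖ ≤
        Bb * (u * v + u * v) := by
    intro i i1 i2 j1 j2 i3 i4 j3 j4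
    rw [norm_mul]
    exact mul_le_mul (hd _) (le_trans (norm_add_le _ _)
      (add_le_add (hprod _ _ _ _) (hprod _ _ _ _))) (norm_nonneg _) hB0
  rw [trace_eq]
  rw [norm_mul]
  have h12 : ‖(1/2 : ℂ)‖ = 1/2 := by norm_num
  rw [h12]
  have h4 : ‖(d 0 * ((e 1 - e 0) * (k 2 - k 1) + (e 3 - e 0) * (k 3 - k 2)) +
       d 2 * ((e 2 - e 1) * (k 0 - k 1) + (e 3 - e 2) * (k 0 - k 3)) +
       d 1 * ((e 0 - e 1) * (k 0 - k 3) + (e 1 - e 2) * (k 2 - k 3)) +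
       d 3 * ((e 0 - e 3) * (k 1 - k 0) + (e 2 - e 3) * (k 2 - k 1)))‖ ≤
      4 * (Bb * (u * v + u * v)) := by
    calc ‖_ + _ + _ + _‖ ≤ ‖_ + _ + _‖ + ‖_‖ := norm_add_le _ _
      _ ≤ ‖_ + _‖ + ‖_‖ + ‖_‖ := by gcongr; exact norm_add_le _ _
      _ ≤ ‖_‖ + ‖_‖ + ‖_‖ + ‖_‖ := by gcongr; exact norm_add_le _ _
      _ ≤ Bb * (u * v + u * v) + Bb * (u * v + u * v) + Bb * (u * v + u * v) +
          Bb * (u * v + u * v) := by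
            gcongr ?_ + ?_ + ?_ + ?_ <;> apply hterm
      _ = 4 * (Bb * (u * v + u * v)) := by ring
  calc (1/2 : ℝ) * ‖_‖ ≤ (1/2) * (4 * (Bb * (u * v + u * v))) := by linarith [h4]
    _ = 4 * Bb * u * v := by ring


/-- The approximating combinatorial integration. -/
noncomputable def phi (n : ℕ) (f g h : ℝ × ℝ → ℂ) : ℂ :=
  ∑ s : Fin n → Fin 4,
    (rho (f ∘ vert s) *
      (Fop * rho (g ∘ vert s) - rho (g ∘ vert s) * Fop) *
      (Fop * rho (h ∘ vert s) - rho (h ∘ vert s) * Fop) * Mmat).trace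

theorem stmt13 (CD : Set (ℝ × ℝ)) (hCDne : CD.Nonempty) (hCDcomp : IsCompact CD)
    (hCDinv : CD = ⋃ i : Fin 4, ifsMap i '' CD)
    (f g h : ℝ × ℝ → ℂ) (hf : ContinuousOn f CD)
    (B : ℝ) (hB : ∀ p ∈ CD, ‖f p‖ ≤ B)
    (Kg Kh : NNReal) (hg : LipschitzOnWith Kg g CD) (hh : LipschitzOnWith Kh h CD)
    (n : ℕ) :
    ‖phi n f g h‖ ≤ 8 * B * Kg * Kh * (4/9 : ℝ) ^ n := by
  have hvm : ∀ (s : Fin n → Fin 4) (i : Fin 4), vert s i ∈ CD :=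
    fun s i => vert_mem hCDne hCDcomp hCDinv s i
  have hB0 : 0 ≤ B := le_trans (norm_nonneg _) (hB _ (hvm (fun _ => 0) 0))
  have hstep : ∀ s : Fin n → Fin 4,
      ‖(rho (f ∘ vert s) *
        (Fop * rho (g ∘ vert s) - rho (g ∘ vert s) * Fop) *
        (Fop * rho (h ∘ vert s) - rho (h ∘ vert s) * Fop) * Mmat).trace‖ ≤
      4 * B * ((Kg : ℝ) * (1/3 : ℝ) ^ n) * ((Kh : ℝ) * (1/3 : ℝ) ^ n) := by
    intro s
    apply trace_norm_le
    · intro i; exact hB _ (hvm s i)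
    · intro i j
      have := hg.dist_le_mul _ (hvm s i) _ (hvm s j)
      rw [Complex.dist_eq] at this
      calc ‖g (vert s i) - g (vert s j)‖ ≤ (Kg : ℝ) * dist (vert s i) (vert s j) := by
            simpa [Function.comp] using this
        _ ≤ (Kg : ℝ) * (1/3 : ℝ) ^ n := by
            have := vert_dist s i j
            exact mul_le_mul_of_nonneg_left this Kg.coe_nonneg
    · intro i j
      have := hh.dist_le_mul _ (hvm s i) _ (hvm s j)
      rw [Complex.dist_eq] at this
      calc ‖h (vert s i) - h (vert s j)‖ ≤ (Kh : ℝ) * dist (vert s i) (vert s j) := by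
            simpa [Function.comp] using this
        _ ≤ (Kh : ℝ) * (1/3 : ℝ) ^ n := by
            have := vert_dist s i j
            exact mul_le_mul_of_nonneg_left this Kh.coe_nonneg
  have hsum : ‖phi n f g h‖ ≤
      (4 : ℝ) ^ n * (4 * B * ((Kg : ℝ) * (1/3 : ℝ) ^ n) * ((Kh : ℝ) * (1/3 : ℝ) ^ n)) := by
    calc ‖phi n f g h‖ ≤ ∑ s : Fin n → Fin 4, ‖(rho (f ∘ vert s) *
        (Fop * rho (g ∘ vert s) - rho (g ∘ vert s) * Fop) *
        (Fop * rho (h ∘ vert s) - rho (h ∘ vert s) * Fop) * Mmat).trace‖ :=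
          norm_sum_le _ _
      _ ≤ ∑ _s : Fin n → Fin 4,
            (4 * B * ((Kg : ℝ) * (1/3 : ℝ) ^ n) * ((Kh : ℝ) * (1/3 : ℝ) ^ n)) :=
          Finset.sum_le_sum (fun s _ => hstep s)
      _ = (4 : ℝ) ^ n * (4 * B * ((Kg : ℝ) * (1/3 : ℝ) ^ n) * ((Kh : ℝ) * (1/3 : ℝ) ^ n)) := by
          rw [Finset.sum_const, Finset.card_univ]
          simp [Fintype.card_fun, mul_comm]
  have key : (4 : ℝ) ^ n * (4 * B * ((Kg : ℝ) * (1/3 : ℝ) ^ n) * ((Kh : ℝ) * (1/3 : ℝ) ^ n)) =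
      4 * B * (Kg : ℝ) * (Kh : ℝ) * (4/9 : ℝ) ^ n := by
    have h1 : (4 : ℝ) ^ n * ((1/3 : ℝ) ^ n * (1/3 : ℝ) ^ n) = (4/9 : ℝ) ^ n := by
      rw [← mul_pow, ← mul_pow]; norm_num
    calc (4 : ℝ) ^ n * (4 * B * ((Kg : ℝ) * (1/3 : ℝ) ^ n) * ((Kh : ℝ) * (1/3 : ℝ) ^ n)) =
        4 * B * (Kg : ℝ) * (Kh : ℝ) * ((4:ℝ)^n * ((1/3:ℝ)^n * (1/3:ℝ)^n)) := by ring
      _ = 4 * B * (Kg : ℝ) * (Kh : ℝ) * (4/9 : ℝ) ^ n := by rw [h1]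
  rw [key] at hsum
  have hpos : 0 ≤ B * (Kg : ℝ) * (Kh : ℝ) * (4/9 : ℝ) ^ n := by positivity
  linarith
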